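/- Let Σ be positive definite with blocks Σ₁₁, Σ₁₂, Σ₂₁, Σ₂₂, let G₂ be an invertible k₂×k₂ matrix and r ∈ ℝ^{k₂}. Set G = (Σ₂₁Σ₁₁⁻¹, G₂), μ₂ = G₂⁻¹(r − Σ₂₁Σ₁₁⁻¹ μ₁), and Σ̃₂₂ = G₂⁻¹(Σ₂₂ − Σ₂₁Σ₁₁⁻¹Σ₁₂)(G₂⁻¹)ᵀ. Then for any x with G x = r, writing x = (x₁, x₂): (x₁ − μ₁)ᵀ Σ₁₁⁻¹ (x₁ − μ₁) + (x₂ − μ₂)ᵀ Σ̃₂₂⁻¹ (x₂ − μ₂) = (x₁ − μ₁)ᵀ (Σ₁₁ − Σ₁₂Σ₂₂⁻¹Σ₂₁)⁻¹ (x₁ − μ₁). -/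

import Mathlib

open Matrix

theorem stmt_19 {k₁ k₂ : ℕ}
    (S11 : Matrix (Fin k₁) (Fin k₁) ℝ) (S12 : Matrix (Fin k₁) (Fin k₂) ℝ)
    (S22 : Matrix (Fin k₂) (Fin k₂) ℝ)
    (hS : (fromBlocks S11 S12 S12ᵀ S22).PosDef)
    (G₂ : Matrix (Fin k₂) (Fin k₂) ℝ) (hG₂ : IsUnit G₂)
    (r : Fin k₂ → ℝ) (μ₁ : Fin k₁ → ℝ) (μ₂ : Fin k₂ → ℝ)
    (hμ₂ : μ₂ = G₂⁻¹ *ᵥ (r - (S12ᵀ * S11⁻¹) *ᵥ μ₁))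
    (St22 : Matrix (Fin k₂) (Fin k₂) ℝ)
    (hSt22 : St22 = G₂⁻¹ * (S22 - S12ᵀ * S11⁻¹ * S12) * (G₂⁻¹)ᵀ)
    (x₁ : Fin k₁ → ℝ) (x₂ : Fin k₂ → ℝ)
    (hx : (S12ᵀ * S11⁻¹) *ᵥ x₁ + G₂ *ᵥ x₂ = r) :
    (x₁ - μ₁) ⬝ᵥ (S11⁻¹ *ᵥ (x₁ - μ₁)) + (x₂ - μ₂) ⬝ᵥ (St22⁻¹ *ᵥ (x₂ - μ₂)) =
      (x₁ - μ₁) ⬝ᵥ ((S11 - S12 * S22⁻¹ * S12ᵀ)⁻¹ *ᵥ (x₁ - μ₁)) := by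
  -- basic facts
  have hSherm := hS.1
  have hbig : (fromBlocks S11 S12 S12ᵀ S22)ᴴ = fromBlocks S11 S12 S12ᵀ S22 := hSherm
  rw [conjTranspose_eq_transpose_of_trivial] at hbig
  rw [fromBlocks_transpose] at hbig
  have h11 : S11ᵀ = S11 := congrArg Matrix.toBlocks₁₁ hbig
  have h22 : S22ᵀ = S22 := congrArg Matrix.toBlocks₂₂ hbig
  -- S11 posdef
  have hS11 : S11.PosDef := by
    refine Matrix.PosDef.of_dotProduct_mulVec_pos (by simpa [IsHermitian, conjTranspose_eq_transpose_of_trivial] using h11) fun y hy => ?_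
    have := hS.dotProduct_mulVec_pos (x := Sum.elim y 0) (by simp [funext_iff, Sum.forall] at hy ⊢; tauto)
    simpa [fromBlocks_mulVec, sumElim_dotProduct_sumElim] using this
  -- S22 posdef
  have hS22 : S22.PosDef := by
    refine Matrix.PosDef.of_dotProduct_mulVec_pos (by simpa [IsHermitian, conjTranspose_eq_transpose_of_trivial] using h22) fun y hy => ?_
    have := hS.dotProduct_mulVec_pos (x := Sum.elim 0 y) (by simp [funext_iff, Sum.forall] at hy ⊢; tauto)
    simpa [fromBlocks_mulVec, sumElim_dotProduct_sumElim] using this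
  have hS11u : IsUnit S11 := hS11.isUnit
  have hS22u : IsUnit S22 := hS22.isUnit
  haveI : Invertible S11 := hS11u.invertible
  -- Schur complement posdef
  set S : Matrix (Fin k₂) (Fin k₂) ℝ := S22 - S12ᵀ * S11⁻¹ * S12 with hSdef
  have hbig' : (fromBlocks S11 S12 S12ᴴ S22).IsHermitian := by
    rw [conjTranspose_eq_transpose_of_trivial]; exact hSherm
  have hSch : S.PosDef := by
    refine Matrix.PosDef.of_dotProduct_mulVec_pos ?_ ?_
    · have := (IsHermitian.fromBlocks₁₁ (α := ℝ) S12 S22 hS11.1).mp hbig'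
      simpa [conjTranspose_eq_transpose_of_trivial] using this
    · intro y hy
      have key := schur_complement_eq₁₁ (α := ℝ) S12 S22 (-((S11⁻¹ * S12) *ᵥ y)) y hS11.1
      simp only [conjTranspose_eq_transpose_of_trivial] at key
      have hpos := hS.dotProduct_mulVec_pos (x := Sum.elim (-((S11⁻¹ * S12) *ᵥ y)) y)
        (by simp [funext_iff, Sum.forall] at hy ⊢; tauto)
      rw [dotProduct_mulVec] at hpos
      rw [key] at hpos
      simp only [neg_add_cancel, star_trivial] at hpos
      simpa [dotProduct_mulVec, zero_vecMul, zero_dotProduct, zero_add] using hpos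
  have hSu : IsUnit S := hSch.isUnit
  have hG₂d : IsUnit G₂.det := (Matrix.isUnit_iff_isUnit_det G₂).mp hG₂
  have hG₂td : IsUnit G₂ᵀ.det := by rwa [det_transpose]
  -- key vector identity: G₂ *ᵥ (x₂ - μ₂) = -((S12ᵀ * S11⁻¹) *ᵥ (x₁ - μ₁))
  have hG₂μ₂ : G₂ *ᵥ μ₂ = r - (S12ᵀ * S11⁻¹) *ᵥ μ₁ := by
    rw [hμ₂, mulVec_mulVec, mul_nonsing_inv _ hG₂d, one_mulVec]
  have hkey : G₂ *ᵥ (x₂ - μ₂) = -((S12ᵀ * S11⁻¹) *ᵥ (x₁ - μ₁)) := by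
    rw [mulVec_sub, hG₂μ₂, ← hx]
    simp [mulVec_sub]
    abel
  -- St22 inverse
  have hSt22inv : St22⁻¹ = G₂ᵀ * S⁻¹ * G₂ := by
    rw [hSt22, transpose_nonsing_inv, Matrix.mul_inv_rev, Matrix.mul_inv_rev,
      nonsing_inv_nonsing_inv _ hG₂td, nonsing_inv_nonsing_inv _ hG₂d, mul_assoc]
  -- second term rewrite
  have h2 : (x₂ - μ₂) ⬝ᵥ (St22⁻¹ *ᵥ (x₂ - μ₂)) =
      ((S12ᵀ * S11⁻¹) *ᵥ (x₁ - μ₁)) ⬝ᵥ (S⁻¹ *ᵥ ((S12ᵀ * S11⁻¹) *ᵥ (x₁ - μ₁))) := by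
    rw [hSt22inv]
    rw [show G₂ᵀ * S⁻¹ * G₂ = G₂ᵀ * (S⁻¹ * G₂) from (mul_assoc _ _ _)]
    rw [← mulVec_mulVec, dotProduct_mulVec (x₂ - μ₂), vecMul_transpose, ← mulVec_mulVec, hkey]
    rw [dotProduct_mulVec, ← dotProduct_mulVec]
    simp [mulVec_neg, dotProduct_neg, neg_dotProduct]
  -- Woodbury
  have hW : (S11 - S12 * S22⁻¹ * S12ᵀ)⁻¹ =
      S11⁻¹ + S11⁻¹ * S12 * S⁻¹ * (S12ᵀ * S11⁻¹) := by
    have := Matrix.add_mul_mul_inv_eq_sub S11 (-S12) S22⁻¹ S12ᵀ hS11u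
      (hS22.inv.isUnit) (by
        rw [nonsing_inv_nonsing_inv _ ((Matrix.isUnit_iff_isUnit_det S22).mp hS22u)]
        show IsUnit (S22 + S12ᵀ * S11⁻¹ * -S12)
        have : S22 + S12ᵀ * S11⁻¹ * -S12 = S := by rw [hSdef, Matrix.mul_neg, ← sub_eq_add_neg]
        rw [this]; exact hSu)
    rw [nonsing_inv_nonsing_inv _ ((Matrix.isUnit_iff_isUnit_det S22).mp hS22u)] at this
    have e1 : S11 + -S12 * S22⁻¹ * S12ᵀ = S11 - S12 * S22⁻¹ * S12ᵀ := by rw [Matrix.neg_mul, Matrix.neg_mul, ← sub_eq_add_neg]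
    have e2 : S22 + S12ᵀ * S11⁻¹ * -S12 = S := by rw [hSdef, Matrix.mul_neg, ← sub_eq_add_neg]
    rw [e1, e2] at this
    rw [this]
    simp only [Matrix.mul_neg, Matrix.neg_mul, sub_neg_eq_add, Matrix.mul_assoc]
  rw [hW, h2]
  -- final algebra
  have hA : (S12ᵀ * S11⁻¹)ᵀ = S11⁻¹ * S12 := by
    rw [transpose_mul, transpose_transpose, transpose_nonsing_inv, h11]
  have hterm : ((S12ᵀ * S11⁻¹) *ᵥ (x₁ - μ₁)) ⬝ᵥ (S⁻¹ *ᵥ ((S12ᵀ * S11⁻¹) *ᵥ (x₁ - μ₁))) =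
      (x₁ - μ₁) ⬝ᵥ ((S11⁻¹ * S12 * S⁻¹ * (S12ᵀ * S11⁻¹)) *ᵥ (x₁ - μ₁)) := by
    have hA' : S12ᵀ * S11⁻¹ = (S11⁻¹ * S12)ᵀ := by rw [transpose_mul, transpose_nonsing_inv, h11]
    rw [mulVec_mulVec, dotProduct_mulVec, dotProduct_mulVec]
    congr 1
    rw [hA', mulVec_transpose, vecMul_vecMul]
    congr 1
    rw [← hA']
    simp only [Matrix.mul_assoc]
  rw [hterm, add_mulVec, dotProduct_add]
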